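/- Let f be a piecewise linear increasing homeomorphism of ℝ whose slopes all lie in a multiplicative subgroup Λ of the positive reals and whose breakpoints lie in A = ℤ[Λ]. Then for any points a < c in A, one has f(c) − f(a) ≡ c − a modulo the additive subgroup IΛ·A generated by all elements (λ−1)·a with λ ∈ Λ, a ∈ A. -/
import Mathlib


open Set in
/-- Bieri–Strebel: easy direction. A PL increasing homeomorphism `f` of `ℝ` with
slopes in a multiplicative subgroup `Λ` of `(0,∞)` and breakpoints in `A = ℤ[Λ]`
satisfies `f c - f a ≡ c - a (mod IΛ·A)` for `a < c` in `A`.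
The PL structure on `[a,c]` is encoded by a partition `x 0 = a < x 1 < ⋯ < x n = c`
with points in `A` and slopes `lam i ∈ Λ`. -/
theorem bieri_strebel_only_if
    (Λ : Set ℝ) (hΛpos : ∀ l ∈ Λ, 0 < l) (hΛone : (1 : ℝ) ∈ Λ)
    (hΛmul : ∀ l ∈ Λ, ∀ m ∈ Λ, l * m ∈ Λ) (hΛinv : ∀ l ∈ Λ, l⁻¹ ∈ Λ)
    (A : Subring ℝ) (hA : A = Subring.closure Λ)
    (I : AddSubgroup ℝ)
    (hI : I = AddSubgroup.closure {x : ℝ | ∃ l ∈ Λ, ∃ a ∈ A, x = (l - 1) * a})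
    (f : ℝ → ℝ) (hmono : StrictMono f) (hbij : Function.Bijective f) (hcont : Continuous f)
    (a c : ℝ) (ha : a ∈ A) (hc : c ∈ A) (hac : a < c)
    (n : ℕ) (hn : 0 < n) (x : ℕ → ℝ) (lam : ℕ → ℝ)
    (hx0 : x 0 = a) (hxn : x n = c)
    (hxlt : ∀ i < n, x i < x (i + 1))
    (hxA : ∀ i ≤ n, x i ∈ A)
    (hlam : ∀ i < n, lam i ∈ Λ)
    (hpl : ∀ i < n, ∀ t ∈ Icc (x i) (x (i + 1)), f t = lam i * (t - x i) + f (x i)) :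
    (f c - f a) - (c - a) ∈ I := by
  subst hx0 hxn
  -- key step for each segment
  have key : ∀ i < n, (f (x (i+1)) - f (x i)) - (x (i+1) - x i) ∈ I := by
    intro i hi
    have hfe := hpl i hi (x (i+1)) ⟨le_of_lt (hxlt i hi), le_refl _⟩
    have hmem : ((lam i - 1) * (x (i+1) - x i)) ∈ I := by
      rw [hI]
      exact AddSubgroup.subset_closure ⟨lam i, hlam i hi, x (i+1) - x i,
        A.sub_mem (hxA (i+1) hi) (hxA i (le_of_lt hi)), rfl⟩
    have : (f (x (i+1)) - f (x i)) - (x (i+1) - x i) = (lam i - 1) * (x (i+1) - x i) := by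
      rw [hfe]; ring
    rw [this]; exact hmem
  have main : ∀ k ≤ n, (f (x k) - f (x 0)) - (x k - x 0) ∈ I := by
    intro k
    induction k with
    | zero => intro _; simpa using I.zero_mem
    | succ m ih =>
      intro hm
      have hmn : m < n := hm
      have h1 := ih (le_of_lt hmn)
      have h2 := key m hmn
      have := I.add_mem h1 h2
      have heq : (f (x (m+1)) - f (x 0)) - (x (m+1) - x 0) =
          ((f (x m) - f (x 0)) - (x m - x 0)) + ((f (x (m+1)) - f (x m)) - (x (m+1) - x m)) := by
        ring
      rw [heq]; exact this
  exact main n le_rfl
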